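/- Decomposition of the hidden time-reversal generator (Theorem 'delsingle'): the hidden time-reversal generator equals the marginal generator plus the time reversal of the hidden generator taken with respect to the stalling state: W̃ = W_mar + P * (W_hid)ᵀ * P⁻¹ (together with the decomposition W = W_mar + W_hid of the forward generator). -/

import Mathlib

open Matrix

/-- Decomposition of the hidden time-reversal generator (Theorem "delsingle"). -/
theorem hidden_TR_decomposition {n : ℕ} (hn : 3 ≤ n)
    (W Whid : Matrix (Fin n) (Fin n) ℝ)
    (hW1 : ∀ i j, i ≠ j → 0 ≤ W i j)
    (hW2 : ∀ j, ∑ i, W i j = 0)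
    (a b : Fin n) (hab : a ≠ b)
    (hWab : 0 < W a b) (hWba : 0 < W b a)
    (hH1 : Whid a b = 0) (hH2 : Whid b a = 0)
    (hH3 : Whid a a = W a a + W b a)
    (hH4 : Whid b b = W b b + W a b)
    (hH5 : ∀ i j, ¬(i = a ∧ j = b) → ¬(i = b ∧ j = a) → ¬(i = a ∧ j = a) →
      ¬(i = b ∧ j = b) → Whid i j = W i j)
    (p : Fin n → ℝ) (hp1 : ∀ i, 0 < p i) (hp2 : ∑ i, p i = 1)
    (hp3 : Whid *ᵥ p = 0)
    (Q : ℝ) (hQdef : Q = Real.log (W a b * p b / (W b a * p a)))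
    (M : ℝ → Matrix (Fin n) (Fin n) ℝ)
    (hM1 : ∀ q, M q a b = W a b * Real.exp (-q))
    (hM2 : ∀ q, M q b a = W b a * Real.exp q)
    (hM3 : ∀ q i j, ¬(i = a ∧ j = b) → ¬(i = b ∧ j = a) → M q i j = W i j) :
    W = (W - Whid) + Whid ∧
    Matrix.diagonal p * (M Q)ᵀ * (Matrix.diagonal p)⁻¹
      = (W - Whid) + Matrix.diagonal p * Whidᵀ * (Matrix.diagonal p)⁻¹ := by

  have hpa := (hp1 a).ne'
  have hpb := (hp1 b).ne'
  have hinv : (Matrix.diagonal p)⁻¹ = Matrix.diagonal (fun i => (p i)⁻¹) := by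
    apply Matrix.inv_eq_right_inv
    rw [Matrix.diagonal_mul_diagonal]
    have : (fun i => p i * (p i)⁻¹) = fun _ : Fin n => (1 : ℝ) :=
      funext fun i => mul_inv_cancel₀ (hp1 i).ne'
    rw [this]
    exact Matrix.diagonal_one
  have hexp : Real.exp Q = W a b * p b / (W b a * p a) := by
    rw [hQdef, Real.exp_log]
    exact div_pos (mul_pos hWab (hp1 b)) (mul_pos hWba (hp1 a))
  refine ⟨by abel, ?_⟩
  ext i j
  have key : ∀ A : Matrix (Fin n) (Fin n) ℝ,
      (Matrix.diagonal p * Aᵀ * Matrix.diagonal (fun i => (p i)⁻¹)) i j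
        = p i * A j i * (p j)⁻¹ := by
    intro A
    rw [Matrix.mul_diagonal, Matrix.diagonal_mul, Matrix.transpose_apply]
  rw [hinv, Matrix.add_apply, Matrix.sub_apply, key, key]
  by_cases h1 : i = a ∧ j = b
  · obtain ⟨rfl, rfl⟩ := h1
    rw [hM2, hH1, hH2, hexp]
    field_simp
    ring
  · by_cases h2 : i = b ∧ j = a
    · obtain ⟨rfl, rfl⟩ := h2
      rw [hM1, hH1, hH2, Real.exp_neg, hexp]
      field_simp
      ring
    · rw [hM3 Q j i (fun h => h2 ⟨h.2, h.1⟩) (fun h => h1 ⟨h.2, h.1⟩)]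
      by_cases hij : i = j
      · subst hij
        have hpi := (hp1 i).ne'
        field_simp
        ring
      · rw [hH5 i j h1 h2 (fun h => hij (h.1.trans h.2.symm))
            (fun h => hij (h.1.trans h.2.symm)),
          hH5 j i (fun h => h2 ⟨h.2, h.1⟩) (fun h => h1 ⟨h.2, h.1⟩)
            (fun h => hij (h.2.trans h.1.symm)) (fun h => hij (h.2.trans h.1.symm))]
        ring
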